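/- arXiv:1106.1280 — 2 statements merged into one kernel-verified Lean document; each statement's English description precedes it below -/
import Mathlib

section
/- (Block-diagonal entropy production in the linear regime) Let ℓ be a positive diagonal matrix on ℝ^E and let j ∈ ℝ^E be arbitrary, with a = ℓ j. Write A^α = (c^α, a) and J*^μ = (c*^μ, j). Then σ = (j, ℓ j) = Σ_{αβ} (L^{-1})_{αβ} A^α A^β + Σ_{μν} (L_*^{-1})_{μν} J*^μ J*^ν, where L^{αβ} = (c^α, ℓ c^β) and L_*^{μν} = (c*^μ, ℓ^{-1} c*^ν). -/
open Matrix BigOperators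

/-- A finite graph with oriented edges: each edge has a head and a tail vertex
(loops and multiple edges are allowed). -/
structure OrientedGraph (V E : Type) where
  head : E → V
  tail : E → V

variable {V E : Type} [Fintype V] [Fintype E] [DecidableEq V] [DecidableEq E]

/-- Signed incidence matrix: `+1` if `v` is the head of `e`, `-1` if `v` is the tail of `e`,
and `0` otherwise (in particular `0` on loops). -/
def inc (G : OrientedGraph V E) : Matrix V E ℝ := fun v e =>
  (if G.head e = v then 1 else 0) - (if G.tail e = v then 1 else 0)

/-- The underlying simple graph of an oriented graph. -/
def toSimple (G : OrientedGraph V E) : SimpleGraph V :=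
  SimpleGraph.fromRel (fun v w => ∃ e, G.head e = v ∧ G.tail e = w)

/-- The underlying simple graph of an oriented graph, restricted to edges in `T`. -/
def toSimpleOn (G : OrientedGraph V E) (T : Finset E) : SimpleGraph V :=
  SimpleGraph.fromRel (fun v w => ∃ e ∈ T, G.head e = v ∧ G.tail e = w)

/-- The oriented graph is connected. -/
def IsConnectedG (G : OrientedGraph V E) : Prop := (toSimple G).Connected

/-- `T` is a spanning tree of `G`: the subgraph on edge set `T` is connected and has
`|V| - 1` edges (equivalently, `T` is a maximal subset of edges containing no cycle). -/
def IsSpanningTree (G : OrientedGraph V E) (T : Finset E) : Prop :=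
  (toSimpleOn G T).Connected ∧ T.card = Fintype.card V - 1

/-- The cycle space `ker ∂ ⊆ ℝ^E`. -/
def cycleSpace (G : OrientedGraph V E) : Submodule ℝ (E → ℝ) :=
  LinearMap.ker (inc G).mulVecLin

/-- The cocycle space: the row space of `∂`, i.e. the range of `∂ᵀ` on `ℝ^V`. -/
def cocycleSpace (G : OrientedGraph V E) : Submodule ℝ (E → ℝ) :=
  LinearMap.range (inc G)ᵀ.mulVecLin

/-- `x` is the fundamental cycle of the chord `a ∉ T`: the signed indicator vector of the
unique cycle in `T ∪ {a}`, oriented so that its coefficient on `a` is `+1`; equivalently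
(for a spanning tree `T`) the unique vector of the cycle space supported on `T ∪ {a}`
with coefficient `+1` on `a`. -/
def IsFundCycle (G : OrientedGraph V E) (T : Finset E) (a : E) (x : E → ℝ) : Prop :=
  x ∈ cycleSpace G ∧ x a = 1 ∧ ∀ e, e ∉ T → e ≠ a → x e = 0

/-- `x` is the fundamental cocycle of the cochord `a ∈ T`: the signed indicator vector of
the cut obtained by removing `a` from the spanning tree `T`, oriented so that its
coefficient on `a` is `+1`; equivalently the unique vector of the cocycle space vanishing
on `T \ {a}` with coefficient `+1` on `a`. -/
def IsFundCocycle (G : OrientedGraph V E) (T : Finset E) (a : E) (x : E → ℝ) : Prop :=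
  x ∈ cocycleSpace G ∧ x a = 1 ∧ ∀ e ∈ T, e ≠ a → x e = 0


section Aux

/-- The cycle space and cocycle space are orthogonal. -/
lemma cycle_cocycle_orth (G : OrientedGraph V E) {x y : E → ℝ}
    (hx : x ∈ cycleSpace G) (hy : y ∈ cocycleSpace G) : x ⬝ᵥ y = 0 := by
  obtain ⟨u, rfl⟩ := hy
  have hx0 : inc G *ᵥ x = 0 := hx
  rw [Matrix.mulVecLin_apply, Matrix.dotProduct_mulVec, Matrix.vecMul_transpose, hx0,
    zero_dotProduct]

lemma dp_aux {m n : Type} [Fintype m] [Fintype n] (P : Matrix m n ℝ) (x : n → ℝ) (v : m → ℝ) :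
    (P *ᵥ x) ⬝ᵥ v = x ⬝ᵥ (Pᵀ *ᵥ v) := by
  rw [Matrix.dotProduct_mulVec, Matrix.vecMul_transpose]

/-- quadratic forms conjugated by an injective matrix over a positive diagonal are posdef -/
lemma posdef_conj {ι : Type} [Fintype ι] [DecidableEq ι] (ℓ : E → ℝ) (hℓ : ∀ e, 0 < ℓ e)
    (P : Matrix E ι ℝ) (hP : ∀ v, P *ᵥ v = 0 → v = 0) :
    (Pᵀ * Matrix.diagonal ℓ * P).PosDef := by
  refine Matrix.posDef_iff_dotProduct_mulVec.mpr ⟨?_, ?_⟩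
  · have h := Matrix.isHermitian_conjTranspose_mul_mul P (Matrix.isHermitian_diagonal ℓ)
    rwa [Matrix.conjTranspose_eq_transpose_of_trivial] at h
  · intro v hv
    have hstar : star v = v := by simp
    have h1 : star v ⬝ᵥ ((Pᵀ * Matrix.diagonal ℓ * P) *ᵥ v)
        = (P *ᵥ v) ⬝ᵥ (Matrix.diagonal ℓ *ᵥ (P *ᵥ v)) := by
      rw [hstar, Matrix.mul_assoc, ← Matrix.mulVec_mulVec, ← dp_aux, ← Matrix.mulVec_mulVec]
    rw [h1]
    have hu : P *ᵥ v ≠ 0 := fun h => hv (hP v h)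
    obtain ⟨e, he⟩ : ∃ e, (P *ᵥ v) e ≠ 0 := by
      by_contra h
      push_neg at h
      exact hu (funext h)
    have h2 : (P *ᵥ v) ⬝ᵥ (Matrix.diagonal ℓ *ᵥ (P *ᵥ v)) = ∑ f, ℓ f * ((P *ᵥ v) f) ^ 2 := by
      simp only [dotProduct, Matrix.mulVec_diagonal]
      exact Finset.sum_congr rfl fun f _ => by ring
    rw [h2]
    apply Finset.sum_pos' (fun f _ => mul_nonneg (hℓ f).le (sq_nonneg _))
    exact ⟨e, Finset.mem_univ e, mul_pos (hℓ e) (by positivity)⟩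

/-- turning a double sum into a quadratic form, and inverting -/
lemma quad_aux {ι : Type} [Fintype ι] [DecidableEq ι] (Q : Matrix ι ι ℝ)
    (hQ : IsUnit Q.det) (z : ι → ℝ) :
    (∑ α, ∑ β, Q⁻¹ α β * (Q *ᵥ z) α * (Q *ᵥ z) β) = z ⬝ᵥ (Q *ᵥ z) := by
  set A := Q *ᵥ z with hA
  have h1 : (∑ α, ∑ β, Q⁻¹ α β * A α * A β) = A ⬝ᵥ (Q⁻¹ *ᵥ A) := by
    simp only [dotProduct, Matrix.mulVec, Finset.mul_sum]
    exact Finset.sum_congr rfl fun α _ => Finset.sum_congr rfl fun β _ => by ring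
  rw [h1, hA, Matrix.mulVec_mulVec, Matrix.nonsing_inv_mul Q hQ, Matrix.one_mulVec,
    dotProduct_comm]

end Aux

/-- block-diagonal entropy production in the linear regime: for a positive
diagonal `ℓ`, arbitrary `j` and `a = ℓ j`,
`σ = (j, ℓ j) = Σ_{αβ} (L⁻¹)_{αβ} A^α A^β + Σ_{μν} (L_*⁻¹)_{μν} J*^μ J*^ν`. -/
theorem stmt_17 {V E : Type} [Fintype V] [Fintype E] [DecidableEq V] [DecidableEq E]
    (G : OrientedGraph V E) (hG : IsConnectedG G) (T : Finset E)
    (hT : IsSpanningTree G T)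
    (c : {e : E // e ∉ T} → (E → ℝ)) (hc : ∀ α, IsFundCycle G T α.1 (c α))
    (cc : {e : E // e ∈ T} → (E → ℝ)) (hcc : ∀ μ, IsFundCocycle G T μ.1 (cc μ))
    (ℓ : E → ℝ) (hℓ : ∀ e, 0 < ℓ e)
    (L : Matrix {e : E // e ∉ T} {e : E // e ∉ T} ℝ)
    (hL : ∀ α β, L α β = c α ⬝ᵥ fun e => ℓ e * c β e)
    (Lstar : Matrix {e : E // e ∈ T} {e : E // e ∈ T} ℝ)
    (hLstar : ∀ μ ν, Lstar μ ν = cc μ ⬝ᵥ fun e => (ℓ e)⁻¹ * cc ν e)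
    (j : E → ℝ) (a : E → ℝ) (ha : a = fun e => ℓ e * j e) :
    j ⬝ᵥ (fun e => ℓ e * j e) =
      (∑ α, ∑ β, L⁻¹ α β * (c α ⬝ᵥ a) * (c β ⬝ᵥ a)) +
      ∑ μ, ∑ ν, Lstar⁻¹ μ ν * (cc μ ⬝ᵥ j) * (cc ν ⬝ᵥ j) := by
  classical
  subst ha
  by_cases hE : Nonempty E
  case neg =>
    haveI : IsEmpty E := not_nonempty_iff.mp hE
    simp [dotProduct, Finset.univ_eq_empty]
  case pos =>
  haveI := hE
  set M : Matrix E E ℝ := Matrix.diagonal ℓ with hMdef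
  set N : Matrix E E ℝ := Matrix.diagonal (fun e => (ℓ e)⁻¹) with hNdef
  have hMN : M * N = 1 := by
    rw [hMdef, hNdef, Matrix.diagonal_mul_diagonal,
      show (fun i => ℓ i * (ℓ i)⁻¹) = fun _ : E => (1 : ℝ) from
        funext fun i => mul_inv_cancel₀ (hℓ i).ne', Matrix.diagonal_one]
  have hNM : N * M = 1 := by
    rw [hMdef, hNdef, Matrix.diagonal_mul_diagonal,
      show (fun i => (ℓ i)⁻¹ * ℓ i) = fun _ : E => (1 : ℝ) from
        funext fun i => inv_mul_cancel₀ (hℓ i).ne', Matrix.diagonal_one]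
  set C : Matrix E {e : E // e ∉ T} ℝ := Matrix.of (fun e α => c α e) with hCdef
  set D : Matrix E {e : E // e ∈ T} ℝ := Matrix.of (fun e μ => cc μ e) with hDdef
  have hCD : Cᵀ * D = 0 := by
    ext α μ
    have h := cycle_cocycle_orth G (hc α).1 (hcc μ).1
    simpa [Matrix.mul_apply, hCdef, hDdef, dotProduct] using h
  have hDC : Dᵀ * C = 0 := by
    have h : (Cᵀ * D)ᵀ = (0 : Matrix _ _ ℝ)ᵀ := by rw [hCD]
    simpa [Matrix.transpose_mul] using h
  have hCeval : ∀ (α β : {e : E // e ∉ T}), c α β.1 = if β = α then 1 else 0 := by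
    intro α β
    by_cases h : β = α
    · subst h; simp [(hc β).2.1]
    · rw [if_neg h]
      exact (hc α).2.2 β.1 β.2 (fun hh => h (Subtype.ext hh))
  have hDeval : ∀ (μ ν : {e : E // e ∈ T}), cc μ ν.1 = if ν = μ then 1 else 0 := by
    intro μ ν
    by_cases h : ν = μ
    · subst h; simp [(hcc ν).2.1]
    · rw [if_neg h]
      exact (hcc μ).2.2 ν.1 ν.2 (fun hh => h (Subtype.ext hh))
  -- injectivity of C and D
  have hCinj : ∀ v, C *ᵥ v = 0 → v = 0 := by
    intro v hv
    ext β
    have h := congrFun hv β.1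
    simpa [Matrix.mulVec, dotProduct, hCdef, hCeval, ite_mul, Finset.sum_ite_eq] using h
  have hDinj : ∀ v, D *ᵥ v = 0 → v = 0 := by
    intro v hv
    ext ν
    have h := congrFun hv ν.1
    simpa [Matrix.mulVec, dotProduct, hDdef, hDeval, ite_mul, Finset.sum_ite_eq] using h
  -- linear independence of the combined family
  set w : ({e : E // e ∉ T} ⊕ {e : E // e ∈ T}) → (E → ℝ) :=
    Sum.elim (fun α => c α) (fun μ => N *ᵥ cc μ) with hwdef
  have hli : LinearIndependent ℝ w := by
    rw [Fintype.linearIndependent_iff]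
    intro g hg
    set p : E → ℝ := ∑ α, g (Sum.inl α) • c α with hp
    set q : E → ℝ := ∑ μ, g (Sum.inr μ) • cc μ with hq
    have hpmem : p ∈ cycleSpace G := Submodule.sum_mem _ fun α _ => Submodule.smul_mem _ _ (hc α).1
    have hqmem : q ∈ cocycleSpace G := Submodule.sum_mem _ fun μ _ => Submodule.smul_mem _ _ (hcc μ).1
    have hsum : ∀ e, p e + (ℓ e)⁻¹ * q e = 0 := by
      intro e
      have h := congrFun hg e
      rw [Fintype.sum_sum_type] at h
      simpa [hwdef, hp, hq, hNdef, Matrix.mulVec_diagonal, Finset.sum_apply,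
        Finset.mul_sum, mul_left_comm] using h
    have hqe : ∀ e, q e = -(ℓ e * p e) := by
      intro e
      have hne : ℓ e ≠ 0 := (hℓ e).ne'
      have h := hsum e
      field_simp at h
      linarith
    have hsum0 : ∑ e, ℓ e * p e ^ 2 = 0 := by
      have h0 : p ⬝ᵥ q = 0 := cycle_cocycle_orth G hpmem hqmem
      have h1 : p ⬝ᵥ q = -∑ e, ℓ e * p e ^ 2 := by
        rw [← Finset.sum_neg_distrib]
        exact Finset.sum_congr rfl fun e _ => by rw [hqe e]; ring
      rw [h1] at h0
      linarith
    have hpe : ∀ e, p e = 0 := by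
      intro e
      have hterm := (Finset.sum_eq_zero_iff_of_nonneg
        (fun f _ => mul_nonneg (hℓ f).le (sq_nonneg _))).mp hsum0 e (Finset.mem_univ e)
      rcases mul_eq_zero.mp hterm with h | h
      · exact absurd h (hℓ e).ne'
      · exact pow_eq_zero_iff two_ne_zero |>.mp h
    have hqe0 : ∀ e, q e = 0 := fun e => by rw [hqe e, hpe e]; ring
    intro i
    match i with
    | Sum.inl β =>
      have h := hpe β.1
      rw [hp] at h
      simpa [Finset.sum_apply, hCeval, mul_ite, Finset.sum_ite_eq] using h
    | Sum.inr ν =>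
      have h := hqe0 ν.1
      rw [hq] at h
      simpa [Finset.sum_apply, hDeval, mul_ite, Finset.sum_ite_eq] using h
  -- the combined family is a basis
  have hcard : Fintype.card ({e : E // e ∉ T} ⊕ {e : E // e ∈ T}) = Module.finrank ℝ (E → ℝ) := by
    rw [Module.finrank_fintype_fun_eq_card]
    exact Fintype.card_congr ((Equiv.sumComm _ _).trans (Equiv.sumCompl (fun e => e ∈ T)))
  haveI : Nonempty ({e : E // e ∉ T} ⊕ {e : E // e ∈ T}) := by
    rw [← Fintype.card_pos_iff, hcard, Module.finrank_fintype_fun_eq_card]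
    exact Fintype.card_pos
  set B := basisOfLinearIndependentOfCardEqFinrank hli hcard with hBdef
  have hB : ⇑B = w := coe_basisOfLinearIndependentOfCardEqFinrank hli hcard
  set x : {e : E // e ∉ T} → ℝ := fun α => B.repr j (Sum.inl α) with hx
  set y : {e : E // e ∈ T} → ℝ := fun μ => B.repr j (Sum.inr μ) with hy
  have hj : j = C *ᵥ x + N *ᵥ (D *ᵥ y) := by
    have h := (B.sum_repr j).symm
    rw [Fintype.sum_sum_type] at h
    rw [h]
    ext e
    simp only [Pi.add_apply, Finset.sum_apply]
    have hCe : (C *ᵥ x) e = ∑ α, c α e * (B.repr j (Sum.inl α)) := by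
      simp [Matrix.mulVec, dotProduct, hCdef, hx]
    have hNe : (N *ᵥ (D *ᵥ y)) e = ∑ μ, (ℓ e)⁻¹ * (cc μ e * (B.repr j (Sum.inr μ))) := by
      rw [hNdef, Matrix.mulVec_diagonal]
      simp only [Matrix.mulVec, dotProduct, hDdef, Matrix.of_apply, hy]
      rw [Finset.mul_sum]
    rw [hCe, hNe]
    congr 1
    · refine Finset.sum_congr rfl fun α _ => ?_
      rw [Pi.smul_apply, smul_eq_mul, hB, hwdef, Sum.elim_inl, mul_comm]
    · refine Finset.sum_congr rfl fun μ _ => ?_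
      rw [Pi.smul_apply, smul_eq_mul, hB, hwdef, Sum.elim_inr, hNdef, Matrix.mulVec_diagonal]
      ring
  -- matrix forms of L and Lstar
  have hLmat : L = Cᵀ * M * C := by
    ext α β
    rw [hL, Matrix.mul_assoc, Matrix.mul_apply]
    simp only [Matrix.transpose_apply, hCdef, hMdef, Matrix.of_apply,
      Matrix.diagonal_mul, dotProduct]
  have hLstarmat : Lstar = Dᵀ * N * D := by
    ext μ ν
    rw [hLstar, Matrix.mul_assoc, Matrix.mul_apply]
    simp only [Matrix.transpose_apply, hDdef, hNdef, Matrix.of_apply,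
      Matrix.diagonal_mul, dotProduct]
  -- positive definiteness
  have hLpd : L.PosDef := hLmat ▸ posdef_conj ℓ hℓ C hCinj
  have hLstarpd : Lstar.PosDef := by
    rw [hLstarmat, hNdef]
    exact posdef_conj (fun e => (ℓ e)⁻¹) (fun e => inv_pos.mpr (hℓ e)) D hDinj
  have hLdet : IsUnit L.det := isUnit_iff_ne_zero.mpr hLpd.det_pos.ne'
  have hLstardet : IsUnit Lstar.det := isUnit_iff_ne_zero.mpr hLstarpd.det_pos.ne'
  -- rewrite the weighted vector as M *ᵥ j
  have haM : (fun e => ℓ e * j e) = M *ᵥ j := by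
    ext e
    rw [hMdef, Matrix.mulVec_diagonal]
  rw [haM]
  -- A = L x and J = Lstar y
  have hAvec : ∀ β, c β ⬝ᵥ (M *ᵥ j) = (L *ᵥ x) β := by
    have key : Cᵀ *ᵥ (M *ᵥ j) = L *ᵥ x := by
      rw [hj]
      simp only [Matrix.mulVec_add, Matrix.mulVec_mulVec]
      rw [show Cᵀ * (M * (N * D)) = 0 by
            rw [← Matrix.mul_assoc M N D, hMN, Matrix.one_mul, hCD],
        Matrix.zero_mulVec, add_zero,
        show Cᵀ * (M * C) = L by rw [← Matrix.mul_assoc, ← hLmat]]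
    intro β
    rw [← key]
    simp only [Matrix.mulVec, dotProduct, Matrix.transpose_apply, hCdef, Matrix.of_apply]
  have hJvec : ∀ ν, cc ν ⬝ᵥ j = (Lstar *ᵥ y) ν := by
    have key : Dᵀ *ᵥ j = Lstar *ᵥ y := by
      rw [hj]
      simp only [Matrix.mulVec_add, Matrix.mulVec_mulVec]
      rw [hDC, Matrix.zero_mulVec, zero_add,
        show Dᵀ * (N * D) = Lstar by rw [← Matrix.mul_assoc, ← hLstarmat]]
    intro ν
    rw [← key]
    simp only [Matrix.mulVec, dotProduct, Matrix.transpose_apply, hDdef, Matrix.of_apply]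
  simp only [hAvec, hJvec]
  rw [quad_aux L hLdet x, quad_aux Lstar hLstardet y]
  -- finally: j ⬝ᵥ M j = x ⬝ᵥ L x + y ⬝ᵥ Lstar y
  have hNsymm : Nᵀ = N := by rw [hNdef, Matrix.diagonal_transpose]
  have hMj : M *ᵥ j = (M * C) *ᵥ x + D *ᵥ y := by
    rw [hj]
    simp only [Matrix.mulVec_add, Matrix.mulVec_mulVec]
    rw [show M * (N * D) = D by rw [← Matrix.mul_assoc, hMN, Matrix.one_mul]]
  have t1 : (C *ᵥ x) ⬝ᵥ ((M * C) *ᵥ x) = x ⬝ᵥ (L *ᵥ x) := by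
    rw [dp_aux, Matrix.mulVec_mulVec,
      show Cᵀ * (M * C) = L by rw [← Matrix.mul_assoc, ← hLmat]]
  have t2 : (N *ᵥ (D *ᵥ y)) ⬝ᵥ ((M * C) *ᵥ x) = 0 := by
    rw [dp_aux, Matrix.mulVec_mulVec,
      show Nᵀ * (M * C) = C by rw [hNsymm, ← Matrix.mul_assoc, hNM, Matrix.one_mul],
      dp_aux, Matrix.mulVec_mulVec, hDC, Matrix.zero_mulVec, dotProduct_zero]
  have t3 : (C *ᵥ x) ⬝ᵥ (D *ᵥ y) = 0 := by
    rw [dp_aux, Matrix.mulVec_mulVec, hCD, Matrix.zero_mulVec, dotProduct_zero]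
  have t4 : (N *ᵥ (D *ᵥ y)) ⬝ᵥ (D *ᵥ y) = y ⬝ᵥ (Lstar *ᵥ y) := by
    rw [dp_aux, Matrix.mulVec_mulVec, dp_aux, Matrix.mulVec_mulVec,
      show Dᵀ * (Nᵀ * D) = Lstar by rw [hNsymm, ← Matrix.mul_assoc, ← hLstarmat]]
  rw [hMj, hj, dotProduct_add, add_dotProduct, add_dotProduct,
    t1, t2, t3, t4, add_zero, zero_add]
end

section
/- (Dual minimum entropy production principle) Let ℓ be a positive diagonal matrix on ℝ^E and fix values J̄*^μ ∈ ℝ. Among all force vectors a ∈ ℝ^E satisfying the constraints (c*^μ, ℓ^{-1} a) = J̄*^μ for all μ, the entropy production σ(a) = (a, ℓ^{-1} a) attains its unique minimum at a* = Σ_μ λ_μ c*^μ with λ = L_*^{-1} J̄*, where L_*^{μν} = (c*^μ, ℓ^{-1} c*^ν). In particular the minimizer lies in the cocycle space rowspace(∂), i.e., it is detailed balanced (all its cycle circulations vanish). -/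
open Matrix BigOperators

variable {V E : Type} [Fintype V] [Fintype E] [DecidableEq V] [DecidableEq E]

/-- dual minimum entropy production principle: among all force vectors `a`
with prescribed macroscopic external currents `(c*^μ, ℓ⁻¹ a) = J̄*^μ`, the entropy
production `σ(a) = (a, ℓ⁻¹ a)` attains its unique minimum at
`a* = Σ_μ (L_*⁻¹ J̄*)_μ c*^μ`; in particular the minimizer lies in the cocycle space
(row space of `∂`), i.e. it is detailed balanced. -/
theorem stmt_19 {V E : Type} [Fintype V] [Fintype E] [DecidableEq V] [DecidableEq E]
    (G : OrientedGraph V E) (hG : IsConnectedG G) (T : Finset E)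
    (hT : IsSpanningTree G T)
    (cc : {e : E // e ∈ T} → (E → ℝ)) (hcc : ∀ μ, IsFundCocycle G T μ.1 (cc μ))
    (ℓ : E → ℝ) (hℓ : ∀ e, 0 < ℓ e)
    (Lstar : Matrix {e : E // e ∈ T} {e : E // e ∈ T} ℝ)
    (hLstar : ∀ μ ν, Lstar μ ν = cc μ ⬝ᵥ fun e => (ℓ e)⁻¹ * cc ν e)
    (Jbar : {e : E // e ∈ T} → ℝ)
    (astar : E → ℝ) (hastar : astar = ∑ μ, (Lstar⁻¹ *ᵥ Jbar) μ • cc μ) :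
    (∀ μ, cc μ ⬝ᵥ (fun e => (ℓ e)⁻¹ * astar e) = Jbar μ) ∧
    (∀ a : E → ℝ, (∀ μ, cc μ ⬝ᵥ (fun e => (ℓ e)⁻¹ * a e) = Jbar μ) → a ≠ astar →
      astar ⬝ᵥ (fun e => (ℓ e)⁻¹ * astar e) < a ⬝ᵥ (fun e => (ℓ e)⁻¹ * a e)) ∧
    astar ∈ cocycleSpace G := by
  -- abbreviation for the weighted bilinear form
  set B : (E → ℝ) → (E → ℝ) → ℝ := fun x y => ∑ e, (ℓ e)⁻¹ * x e * y e with hB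
  have hdot : ∀ x y : E → ℝ, x ⬝ᵥ (fun e => (ℓ e)⁻¹ * y e) = B x y := by
    intro x y
    simp only [dotProduct, hB]
    exact Finset.sum_congr rfl fun e _ => by ring
  have hBsymm : ∀ x y, B x y = B y x := fun x y =>
    Finset.sum_congr rfl fun e _ => by ring
  have hBsub : ∀ x y z, B x (y - z) = B x y - B x z := by
    intro x y z
    rw [← Finset.sum_sub_distrib]
    exact Finset.sum_congr rfl fun e _ => by simp [Pi.sub_apply]; ring
  have hBsum : ∀ (x : E → ℝ) (c : {e : E // e ∈ T} → ℝ),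
      B x (∑ μ, c μ • cc μ) = ∑ μ, c μ * B x (cc μ) := by
    intro x c
    simp only [hB]
    have step1 : ∀ e, (ℓ e)⁻¹ * x e * (∑ μ, c μ • cc μ) e
        = ∑ μ, c μ * ((ℓ e)⁻¹ * x e * cc μ e) := by
      intro e
      rw [Finset.sum_apply, Finset.mul_sum]
      exact Finset.sum_congr rfl fun μ _ => by simp only [Pi.smul_apply, smul_eq_mul]; ring
    rw [Finset.sum_congr rfl (fun e _ => step1 e), Finset.sum_comm]
    exact Finset.sum_congr rfl fun μ _ => by rw [Finset.mul_sum]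
  have hdelta : ∀ (μ ν : {e : E // e ∈ T}), cc μ ν.1 = if ν = μ then 1 else 0 := by
    intro μ ν
    by_cases h : ν = μ
    · subst h; simp [(hcc ν).2.1]
    · rw [if_neg h]
      exact (hcc μ).2.2 ν.1 ν.2 (fun he => h (Subtype.ext he))
  have hw_eval : ∀ (x : {e : E // e ∈ T} → ℝ) (ν : {e : E // e ∈ T}),
      (∑ μ, x μ • cc μ) ν.1 = x ν := by
    intro x ν
    rw [Finset.sum_apply]
    simp [hdelta, mul_ite]
  have hBpos : ∀ d : E → ℝ, d ≠ 0 → 0 < B d d := by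
    intro d hd
    obtain ⟨e, he⟩ := Function.ne_iff.mp hd
    apply Finset.sum_pos'
    · intro i _
      rw [mul_assoc]
      exact mul_nonneg (le_of_lt (inv_pos.2 (hℓ i))) (mul_self_nonneg _)
    · refine ⟨e, Finset.mem_univ e, ?_⟩
      rw [mul_assoc]
      exact mul_pos (inv_pos.2 (hℓ e)) (mul_self_pos.2 he)
  -- Lstar is positive definite, hence invertible
  have hLpd : Lstar.PosDef := by
    rw [Matrix.posDef_iff_dotProduct_mulVec]
    constructor
    · ext μ ν
      simp only [Matrix.conjTranspose_apply, star_trivial]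
      rw [hLstar, hLstar, hdot, hdot, hBsymm]
    · intro x hx
      have hw : (∑ μ, x μ • cc μ) ≠ 0 := by
        intro h0
        apply hx
        funext ν
        have := hw_eval x ν
        rw [h0] at this
        simpa using this.symm
      have hcomp : dotProduct (star x) (Lstar *ᵥ x) = B (∑ μ, x μ • cc μ) (∑ μ, x μ • cc μ) := by
        rw [hBsum]
        simp only [star_trivial, dotProduct, Matrix.mulVec, dotProduct]
        apply Finset.sum_congr rfl
        intro μ _
        rw [hBsymm, hBsum]
        simp only [Finset.mul_sum]
        apply Finset.sum_congr rfl
        intro ν _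
        rw [hLstar, hdot]
        ring
      rw [hcomp]
      exact hBpos _ hw
  have hdet : IsUnit Lstar.det := hLpd.det_pos.ne'.isUnit
  -- astar satisfies the constraints
  have hsat : ∀ μ, B (cc μ) astar = Jbar μ := by
    intro μ
    rw [hastar, hBsum]
    have : ∑ ν, (Lstar⁻¹ *ᵥ Jbar) ν * B (cc μ) (cc ν) = (Lstar *ᵥ (Lstar⁻¹ *ᵥ Jbar)) μ := by
      simp only [Matrix.mulVec, dotProduct]
      apply Finset.sum_congr rfl
      intro ν _
      rw [hLstar, hdot]
      ring
    rw [this, Matrix.mulVec_mulVec, Matrix.mul_nonsing_inv Lstar hdet, Matrix.one_mulVec]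
  refine ⟨fun μ => by rw [hdot]; exact hsat μ, ?_, ?_⟩
  · intro a ha hane
    set d : E → ℝ := a - astar with hd
    have hdne : d ≠ 0 := sub_ne_zero.mpr hane
    have hBd : ∀ μ, B (cc μ) d = 0 := by
      intro μ
      rw [hd, hBsub, hsat μ]
      have := ha μ
      rw [hdot] at this
      rw [this, sub_self]
    have hBad : B astar d = 0 := by
      rw [hBsymm, hastar, hBsum]
      apply Finset.sum_eq_zero
      intro μ _
      rw [hBsymm, hBd μ, mul_zero]
    have hae : ∀ e, a e = astar e + d e := by
      intro e; simp [hd]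
    have hexpand : B a a = B astar astar + B d d + 2 * B astar d := by
      simp only [hB, Finset.mul_sum, ← Finset.sum_add_distrib]
      apply Finset.sum_congr rfl
      intro e _
      rw [hae e]
      ring
    rw [hdot, hdot, hexpand, hBad]
    have := hBpos d hdne
    linarith
  · rw [hastar]
    exact Submodule.sum_mem _ fun μ _ => Submodule.smul_mem _ _ (hcc μ).1
end
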